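/- Let ω, κ ≥ 1 be integers, let S_1, …, S_ω be finite sets of κ-dimensional vectors of nonnegative integers, and let t be a κ-dimensional vector of nonnegative integers. Construct the hedonic game with agents: one marker agent M_i for each i ∈ {1, …, ω}, and, for each j ∈ {1, …, κ}, exactly t[j] normal agents of color g_j. Call a coalition C satisfying for M_i if C contains M_i, contains no marker agent other than M_i, and there exists s ∈ S_i such that for every j ∈ {1, …, κ} the number of normal agents of color g_j in C equals s[j]. Preferences: M_i is indifferent among all coalitions satisfying for M_i, strictly prefers each of them to {M_i}, and strictly prefers {M_i} to every other coalition containing M_i; every normal agent a is indifferent among all coalitions containing a that contain exactly one marker agent, strictly prefers these to coalitions containing a with no marker agent (among which a is indifferent), and strictly prefers the latter to coalitions containing a with at least two marker agents (among which a is indifferent). Then the following are equivalent: (1) the game admits a Nash stable outcome consisting of at most ω coalitions; (2) the game admits an individually stable outcome consisting of at most ω coalitions; (3) there is a choice, for each i ∈ {1, …, ω}, of either a vector s_i ∈ S_i or nothing, such that the chosen vectors sum to t. -/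

import Mathlib

set_option maxHeartbeats 1000000


/-- Strict preference derived from a weak preference relation. -/
def SPref {α : Type*} (pref : α → Finset α → Finset α → Prop)
    (i : α) (X Y : Finset α) : Prop :=
  pref i X Y ∧ ¬ pref i Y X

/-- An outcome: a partition of the agents into nonempty coalitions. -/
def IsOutcome {α : Type*} [Fintype α] [DecidableEq α] (Part : Finset (Finset α)) : Prop :=
  (∀ C ∈ Part, C.Nonempty) ∧
  (∀ C ∈ Part, ∀ D ∈ Part, C ≠ D → Disjoint C D) ∧
  (∀ i : α, ∃ C ∈ Part, i ∈ C)

/-- Nash stability. -/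
def NashStable {α : Type*} [DecidableEq α] (pref : α → Finset α → Finset α → Prop)
    (Part : Finset (Finset α)) : Prop :=
  ∀ i : α, ∀ Ci ∈ Part, i ∈ Ci →
    ∀ C : Finset α, (C ∈ Part ∨ C = ∅) → C ≠ Ci →
      ¬ SPref pref i (insert i C) Ci

/-- Individual stability. -/
def IndStable {α : Type*} [DecidableEq α] (pref : α → Finset α → Finset α → Prop)
    (Part : Finset (Finset α)) : Prop :=
  ∀ i : α, ∀ Ci ∈ Part, i ∈ Ci →
    ∀ C : Finset α, (C ∈ Part ∨ C = ∅) → C ≠ Ci →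
      ¬ (SPref pref i (insert i C) Ci ∧ ∀ j ∈ C, pref j (insert i C) C)

/-- The agents: one marker agent `Sum.inl i` per `i`, and for each color `j` exactly
`t j` normal agents `Sum.inr ⟨j, x⟩` of color `j`. -/
abbrev MSSAgent (ω κ : ℕ) (t : Fin κ → ℕ) := Fin ω ⊕ (Σ j : Fin κ, Fin (t j))

/-- The number of marker agents in a coalition. -/
def markerCount {ω κ : ℕ} {t : Fin κ → ℕ} (C : Finset (MSSAgent ω κ t)) : ℕ :=
  (Finset.univ.filter (fun i : Fin ω => Sum.inl i ∈ C)).card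

/-- The number of normal agents of color `j` in a coalition. -/
def colorCount {ω κ : ℕ} {t : Fin κ → ℕ} (j : Fin κ) (C : Finset (MSSAgent ω κ t)) : ℕ :=
  (Finset.univ.filter (fun x : Fin (t j) => Sum.inr (⟨j, x⟩ : Σ j : Fin κ, Fin (t j)) ∈ C)).card

/-- A coalition is satisfying for marker `i` if it contains `M_i`, contains no other
marker, and for some vector `s ∈ S i`, contains exactly `s j` normal agents of every
color `j`. -/
def Satisfying {ω κ : ℕ} {t : Fin κ → ℕ} (S : Fin ω → Finset (Fin κ → ℕ)) (i : Fin ω)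
    (C : Finset (MSSAgent ω κ t)) : Prop :=
  Sum.inl i ∈ C ∧ (∀ i' : Fin ω, Sum.inl i' ∈ C → i' = i) ∧
  ∃ s ∈ S i, ∀ j : Fin κ, colorCount j C = s j


/-- Auxiliary equivalence: the fiber of `Sigma.fst` over `i` is `β i`. -/
def MSSfiberEquiv {n : ℕ} {β : Fin n → Type*} (i : Fin n) :
    {p : (Σ i', β i') // p.1 = i} ≃ β i where
  toFun p := p.2 ▸ p.1.2
  invFun b := ⟨⟨i, b⟩, rfl⟩
  left_inv := by rintro ⟨⟨i', b⟩, rfl⟩; rfl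
  right_inv b := rfl

lemma MSS_markerCount_insert_inr {ω κ : ℕ} {t : Fin κ → ℕ}
    (a : Σ j : Fin κ, Fin (t j)) (C : Finset (MSSAgent ω κ t)) :
    markerCount (insert (Sum.inr a) C) = markerCount C := by
  unfold markerCount
  congr 1
  apply Finset.filter_congr
  intro i _
  simp

lemma MSS_markerCount_empty {ω κ : ℕ} {t : Fin κ → ℕ} :
    markerCount (∅ : Finset (MSSAgent ω κ t)) = 0 := by
  simp [markerCount]

/-- The hedonic game built from a Multidimensional Subset Sum instance
admits a Nash stable outcome with at most ω coalitions iff it admits an individually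
stable outcome with at most ω coalitions iff one can pick at most one vector from each
set so that the chosen vectors sum to the target. -/
theorem mss_reduction (ω κ : ℕ) (hω : 1 ≤ ω) (hκ : 1 ≤ κ)
    (S : Fin ω → Finset (Fin κ → ℕ)) (t : Fin κ → ℕ)
    (pref : MSSAgent ω κ t → Finset (MSSAgent ω κ t) → Finset (MSSAgent ω κ t) → Prop)
    (htot : ∀ (a : MSSAgent ω κ t) (X Y : Finset (MSSAgent ω κ t)),
      a ∈ X → a ∈ Y → pref a X Y ∨ pref a Y X)
    (htrans : ∀ (a : MSSAgent ω κ t) (X Y Z : Finset (MSSAgent ω κ t)),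
      pref a X Y → pref a Y Z → pref a X Z)
    -- marker agent Mᵢ is indifferent among all coalitions satisfying for Mᵢ
    (hM_indiff : ∀ (i : Fin ω) (C C' : Finset (MSSAgent ω κ t)),
      Satisfying S i C → Satisfying S i C' → pref (Sum.inl i) C C')
    -- it strictly prefers each of them to being alone
    (hM_over_alone : ∀ (i : Fin ω) (C : Finset (MSSAgent ω κ t)),
      Satisfying S i C → SPref pref (Sum.inl i) C {Sum.inl i})
    -- and strictly prefers being alone to every other coalition containing it
    (hM_alone_over_rest : ∀ (i : Fin ω) (C : Finset (MSSAgent ω κ t)),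
      Sum.inl i ∈ C → ¬ Satisfying S i C → C ≠ {Sum.inl i} →
      SPref pref (Sum.inl i) {Sum.inl i} C)
    -- normal agents: indifferent among coalitions with exactly one marker agent
    (hN_indiff_one : ∀ (a : Σ j : Fin κ, Fin (t j)) (C C' : Finset (MSSAgent ω κ t)),
      Sum.inr a ∈ C → Sum.inr a ∈ C' → markerCount C = 1 → markerCount C' = 1 →
      pref (Sum.inr a) C C')
    -- strictly preferring these to coalitions with no marker agent
    (hN_one_over_zero : ∀ (a : Σ j : Fin κ, Fin (t j)) (C C' : Finset (MSSAgent ω κ t)),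
      Sum.inr a ∈ C → Sum.inr a ∈ C' → markerCount C = 1 → markerCount C' = 0 →
      SPref pref (Sum.inr a) C C')
    -- indifferent among coalitions with no marker agent
    (hN_indiff_zero : ∀ (a : Σ j : Fin κ, Fin (t j)) (C C' : Finset (MSSAgent ω κ t)),
      Sum.inr a ∈ C → Sum.inr a ∈ C' → markerCount C = 0 → markerCount C' = 0 →
      pref (Sum.inr a) C C')
    -- strictly preferring the latter to coalitions with at least two marker agents
    (hN_zero_over_two : ∀ (a : Σ j : Fin κ, Fin (t j)) (C C' : Finset (MSSAgent ω κ t)),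
      Sum.inr a ∈ C → Sum.inr a ∈ C' → markerCount C = 0 → 2 ≤ markerCount C' →
      SPref pref (Sum.inr a) C C')
    -- indifferent among coalitions with at least two marker agents
    (hN_indiff_two : ∀ (a : Σ j : Fin κ, Fin (t j)) (C C' : Finset (MSSAgent ω κ t)),
      Sum.inr a ∈ C → Sum.inr a ∈ C' → 2 ≤ markerCount C → 2 ≤ markerCount C' →
      pref (Sum.inr a) C C') :
    ((∃ Part : Finset (Finset (MSSAgent ω κ t)),
        IsOutcome Part ∧ Part.card ≤ ω ∧ NashStable pref Part) ↔
      (∃ Part : Finset (Finset (MSSAgent ω κ t)),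
        IsOutcome Part ∧ Part.card ≤ ω ∧ IndStable pref Part)) ∧
    ((∃ Part : Finset (Finset (MSSAgent ω κ t)),
        IsOutcome Part ∧ Part.card ≤ ω ∧ IndStable pref Part) ↔
      (∃ f : Fin ω → Option (Fin κ → ℕ),
        (∀ (i : Fin ω) (s : Fin κ → ℕ), f i = some s → s ∈ S i) ∧
        ∀ j : Fin κ, (∑ i : Fin ω, ((f i).getD 0) j) = t j)) := by
  classical
  -- reflexivity of pref
  have hrefl : ∀ (a : MSSAgent ω κ t) (X : Finset (MSSAgent ω κ t)), a ∈ X → pref a X X := by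
    intro a X h; rcases htot a X X h h with h' | h' <;> exact h'
  -- Nash stable implies individually stable
  have nsis : ∀ Part : Finset (Finset (MSSAgent ω κ t)),
      NashStable pref Part → IndStable pref Part := by
    intro Part h i Ci hCi hiCi C hC hne hcon
    exact h i Ci hCi hiCi C hC hne hcon.1
  -- solution implies Nash stable outcome with ≤ ω coalitions
  have sol_ns : (∃ f : Fin ω → Option (Fin κ → ℕ),
        (∀ (i : Fin ω) (s : Fin κ → ℕ), f i = some s → s ∈ S i) ∧
        ∀ j : Fin κ, (∑ i : Fin ω, ((f i).getD 0) j) = t j) →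
      ∃ Part : Finset (Finset (MSSAgent ω κ t)),
        IsOutcome Part ∧ Part.card ≤ ω ∧ NashStable pref Part := by
    rintro ⟨f, hfS, hsum⟩
    set s : Fin ω → Fin κ → ℕ := fun i => (f i).getD 0 with hs
    have hcard : ∀ j : Fin κ, Fintype.card (Σ i : Fin ω, Fin (s i j)) = t j := by
      intro j; simp [Fintype.card_sigma, hsum j]; exact hsum j
    let e : ∀ j : Fin κ, Fin (t j) ≃ Σ i : Fin ω, Fin (s i j) :=
      fun j => (Fintype.equivFinOfCardEq (hcard j)).symm
    let assign : MSSAgent ω κ t → Fin ω :=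
      Sum.elim id (fun p => (e p.1 p.2).1)
    let Co : Fin ω → Finset (MSSAgent ω κ t) :=
      fun i => Finset.univ.filter (fun a => assign a = i)
    have hmemCo : ∀ (a : MSSAgent ω κ t) (i : Fin ω), a ∈ Co i ↔ assign a = i := by
      intro a i; simp [Co]
    have hMCo : ∀ i : Fin ω, Sum.inl i ∈ Co i := by
      intro i; rw [hmemCo]; rfl
    have hMCo' : ∀ i i' : Fin ω, Sum.inl i' ∈ Co i → i' = i := by
      intro i i' h; rw [hmemCo] at h; exact h
    have hmarkCo : ∀ i : Fin ω, markerCount (Co i) = 1 := by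
      intro i
      unfold markerCount
      have h1 : (Finset.univ.filter fun i' : Fin ω => Sum.inl i' ∈ Co i) = {i} := by
        ext i'
        simp only [Finset.mem_filter, Finset.mem_univ, true_and, Finset.mem_singleton]
        rw [hmemCo]
        exact Iff.rfl
      rw [h1]; simp
    have hcolor : ∀ (j : Fin κ) (i : Fin ω), colorCount j (Co i) = s i j := by
      intro j i
      have h1 : colorCount j (Co i)
          = (Finset.univ.filter fun x : Fin (t j) => (e j x).1 = i).card := by
        unfold colorCount
        congr 1
        apply Finset.filter_congr
        intro x _
        rw [hmemCo]
        exact Iff.rfl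
      rw [h1, ← Fintype.card_subtype]
      rw [Fintype.card_congr
        ((Equiv.subtypeEquiv (e j) (fun x => Iff.rfl)).trans (MSSfiberEquiv i))]
      simp
    -- if f i = none, the coalition is a singleton
    have hCoSing : ∀ i : Fin ω, f i = none → Co i = {Sum.inl i} := by
      intro i hfi
      ext a
      rw [hmemCo, Finset.mem_singleton]
      constructor
      · intro h
        rcases a with i' | ⟨j, x⟩
        · simp only [assign, Sum.elim_inl, id] at h; rw [h]
        · exfalso
          have hy : Fin (s i j) := h ▸ (e j x).2
          have : s i j = 0 := by simp [hs, hfi]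
          rw [this] at hy
          exact hy.elim0
      · rintro rfl; rfl
    -- if f i = some si, the coalition is satisfying
    have hCoSat : ∀ (i : Fin ω) (si : Fin κ → ℕ), f i = some si → Satisfying S i (Co i) := by
      intro i si hfi
      refine ⟨hMCo i, hMCo' i, si, hfS i si hfi, ?_⟩
      intro j
      rw [hcolor j i]
      simp [hs, hfi]
    clear_value Co assign e
    -- the partition
    refine ⟨Finset.image Co Finset.univ, ⟨?_, ?_, ?_⟩, ?_, ?_⟩
    · rintro C hC
      obtain ⟨i, -, rfl⟩ := Finset.mem_image.mp hC
      exact ⟨Sum.inl i, hMCo i⟩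
    · rintro C hC D hD hne
      obtain ⟨i, -, rfl⟩ := Finset.mem_image.mp hC
      obtain ⟨i', -, rfl⟩ := Finset.mem_image.mp hD
      rw [Finset.disjoint_left]
      intro a ha ha'
      rw [hmemCo] at ha ha'
      exact hne (by rw [← ha, ← ha'])
    · intro a
      exact ⟨Co (assign a), Finset.mem_image_of_mem Co (Finset.mem_univ _),
        (hmemCo a _).mpr rfl⟩
    · exact Finset.card_image_le.trans (by simp)
    · -- Nash stability
      intro a Ca hCa haCa C hC hne
      obtain ⟨ii, -, rfl⟩ := Finset.mem_image.mp hCa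
      rcases a with m | ⟨j, x⟩
      · -- marker agent
        have hm : m = ii := hMCo' ii m haCa
        subst hm
        rcases hC with hC | rfl
        · -- C is some other coalition Co i'
          obtain ⟨i', -, rfl⟩ := Finset.mem_image.mp hC
          have hii' : i' ≠ m := by rintro rfl; exact hne rfl
          set X := insert (Sum.inl m) (Co i') with hX
          have hXi' : Sum.inl i' ∈ X := Finset.mem_insert_of_mem (hMCo i')
          have hXns : ¬ Satisfying S m X := by
            intro hsat
            exact hii' (hsat.2.1 i' hXi')
          have hXne : X ≠ {Sum.inl m} := by
            intro h
            rw [h] at hXi'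
            exact hii' (Sum.inl.inj (Finset.mem_singleton.mp hXi'))
          have halone := hM_alone_over_rest m X (Finset.mem_insert_self _ _) hXns hXne
          rcases h : f m with _ | si
          · rw [hCoSing m h]
            rintro ⟨h1, -⟩
            exact halone.2 h1
          · have hsat := hCoSat m si h
            have h1 := hM_over_alone m (Co m) hsat
            have h2 : pref (Sum.inl m) (Co m) X := htrans _ _ _ _ h1.1 halone.1
            rintro ⟨-, h3⟩
            exact h3 h2
        · -- C = ∅
          rcases h : f m with _ | si
          · have hsing := hCoSing m h
            rw [hsing]
            rw [show insert (Sum.inl m) (∅ : Finset (MSSAgent ω κ t)) = {Sum.inl m} from rfl]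
            rintro ⟨-, h2⟩
            exact h2 (hrefl _ _ (Finset.mem_singleton_self _))
          · have hsat := hCoSat m si h
            have h1 := hM_over_alone m (Co m) hsat
            rw [show insert (Sum.inl m) (∅ : Finset (MSSAgent ω κ t)) = {Sum.inl m} from rfl]
            rintro ⟨h2, -⟩
            exact h1.2 h2
      · -- normal agent
        have hmark1 : markerCount (Co ii) = 1 := hmarkCo ii
        rcases hC with hC | rfl
        · obtain ⟨i', -, rfl⟩ := Finset.mem_image.mp hC
          have hX : markerCount (insert (Sum.inr ⟨j, x⟩) (Co i')) = 1 := by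
            rw [MSS_markerCount_insert_inr]
            exact hmarkCo i'
          have h1 := hN_indiff_one ⟨j, x⟩ (Co ii) (insert (Sum.inr ⟨j, x⟩) (Co i'))
            haCa (Finset.mem_insert_self _ _) hmark1 hX
          rintro ⟨-, h2⟩
          exact h2 h1
        · have hX : markerCount (insert (Sum.inr ⟨j, x⟩) (∅ : Finset (MSSAgent ω κ t))) = 0 := by
            rw [MSS_markerCount_insert_inr]
            exact MSS_markerCount_empty
          have h1 := hN_one_over_zero ⟨j, x⟩ (Co ii) (insert (Sum.inr ⟨j, x⟩) ∅)
            haCa (Finset.mem_insert_self _ _) hmark1 hX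
          rintro ⟨h2, -⟩
          exact h1.2 h2
  -- individually stable outcome with ≤ ω coalitions implies solution
  have is_sol : (∃ Part : Finset (Finset (MSSAgent ω κ t)),
        IsOutcome Part ∧ Part.card ≤ ω ∧ IndStable pref Part) →
      (∃ f : Fin ω → Option (Fin κ → ℕ),
        (∀ (i : Fin ω) (s : Fin κ → ℕ), f i = some s → s ∈ S i) ∧
        ∀ j : Fin κ, (∑ i : Fin ω, ((f i).getD 0) j) = t j) := by
    rintro ⟨Part, ⟨hnonemp, hdisj, hcov⟩, hcard, hIS⟩
    choose Cof hCofP hCofmem using hcov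
    have hCof_uniq : ∀ (a : MSSAgent ω κ t) (C : Finset (MSSAgent ω κ t)),
        C ∈ Part → a ∈ C → C = Cof a := by
      intro a C hC haC
      by_contra hne'
      exact Finset.disjoint_left.mp (hdisj C hC (Cof a) (hCofP a) hne') haC (hCofmem a)
    -- step 1: each coalition has at most one marker
    have hle1 : ∀ C ∈ Part, markerCount C ≤ 1 := by
      intro C hC
      by_contra h
      push_neg at h
      obtain ⟨i, hi, i', hi', hii⟩ := Finset.one_lt_card.mp h
      rw [Finset.mem_filter] at hi hi'
      have hnsat : ¬ Satisfying S i C := by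
        intro hsat
        exact hii ((hsat.2.1 i hi.2).trans (hsat.2.1 i' hi'.2).symm)
      have hCne : C ≠ {Sum.inl i} := by
        intro h'
        rw [h'] at hi'
        exact hii ((Sum.inl.inj (Finset.mem_singleton.mp hi'.2)).symm ▸ rfl)
      refine hIS (Sum.inl i) C hC hi.2 ∅ (Or.inr rfl)
        (fun h' => (hnonemp C hC).ne_empty h'.symm) ⟨?_, by simp⟩
      simpa using hM_alone_over_rest i C hi.2 hnsat hCne
    have hmark_eq : ∀ C ∈ Part, ∀ i i' : Fin ω, Sum.inl i ∈ C → Sum.inl i' ∈ C → i = i' := by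
      intro C hC i i' h1 h2
      exact Finset.card_le_one.mp (hle1 C hC) i
        (Finset.mem_filter.mpr ⟨Finset.mem_univ _, h1⟩) i'
        (Finset.mem_filter.mpr ⟨Finset.mem_univ _, h2⟩)
    -- step 2: the map i ↦ coalition of marker i is injective, image = Part
    have hinj : ∀ i ∈ (Finset.univ : Finset (Fin ω)), ∀ i' ∈ (Finset.univ : Finset (Fin ω)),
        Cof (Sum.inl i) = Cof (Sum.inl i') → i = i' := by
      intro i _ i' _ h
      exact hmark_eq (Cof (Sum.inl i)) (hCofP _) i i' (hCofmem _) (h ▸ hCofmem (Sum.inl i'))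
    have hωle : ω ≤ Part.card := by
      have := Finset.card_le_card_of_injOn (s := (Finset.univ : Finset (Fin ω)))
        (t := Part) (fun i : Fin ω => Cof (Sum.inl i)) (fun i _ => hCofP _) (fun i hi i' hi' h => hinj i (by simpa using hi) i' (by simpa using hi') h)
      simpa using this
    have himg : Finset.image (fun i : Fin ω => Cof (Sum.inl i)) Finset.univ = Part := by
      apply Finset.eq_of_subset_of_card_le
      · intro C hC
        obtain ⟨i, -, rfl⟩ := Finset.mem_image.mp hC
        exact hCofP _
      · rw [Finset.card_image_of_injOn
          (fun i hi i' hi' h => hinj i (by simpa using hi) i' (by simpa using hi') h)]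
        simpa using hcard
    -- step 3: each marker's coalition is satisfying or a singleton
    have hsat_or : ∀ i : Fin ω,
        Satisfying S i (Cof (Sum.inl i)) ∨ Cof (Sum.inl i) = {Sum.inl i} := by
      intro i
      by_contra h
      push_neg at h
      refine hIS (Sum.inl i) (Cof (Sum.inl i)) (hCofP _) (hCofmem _) ∅ (Or.inr rfl)
        (fun h' => (hnonemp _ (hCofP (Sum.inl i))).ne_empty h'.symm) ⟨?_, by simp⟩
      simpa using hM_alone_over_rest i (Cof (Sum.inl i)) (hCofmem _) h.1 h.2
    refine ⟨fun i => if h : Satisfying S i (Cof (Sum.inl i))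
      then some (fun j => colorCount j (Cof (Sum.inl i))) else none, ?_, ?_⟩
    · intro i sv hfi
      simp only [] at hfi
      by_cases h : Satisfying S i (Cof (Sum.inl i))
      · rw [dif_pos h] at hfi
        obtain ⟨s', hs'S, hs'⟩ := h.2.2
        have : sv = s' := by
          funext j
          rw [← Option.some_inj.mp hfi]
          exact hs' j
        rw [this]; exact hs'S
      · rw [dif_neg h] at hfi; exact absurd hfi (by simp)
    · intro j
      have hgetD : ∀ i : Fin ω,
          ((if h : Satisfying S i (Cof (Sum.inl i))
            then some (fun j => colorCount j (Cof (Sum.inl i))) else none).getD 0) j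
          = colorCount j (Cof (Sum.inl i)) := by
        intro i
        by_cases h : Satisfying S i (Cof (Sum.inl i))
        · rw [dif_pos h]; rfl
        · rw [dif_neg h]
          rcases hsat_or i with h' | h'
          · exact absurd h' h
          · rw [h']
            simp [colorCount]
      rw [Finset.sum_congr rfl (fun i _ => hgetD i)]
      have h1 : ∑ i : Fin ω, colorCount j (Cof (Sum.inl i))
          = ∑ C ∈ Part, colorCount j C := by
        rw [← himg, Finset.sum_image
          (fun i hi i' hi' h => hinj i (by simpa using hi) i' (by simpa using hi') h)]
      rw [h1]
      have h2 : ∀ x : Fin (t j),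
          (Part.filter (fun C => Sum.inr (⟨j, x⟩ : Σ j : Fin κ, Fin (t j)) ∈ C)).card = 1 := by
        intro x
        rw [Finset.card_eq_one]
        refine ⟨Cof (Sum.inr ⟨j, x⟩), ?_⟩
        ext C
        simp only [Finset.mem_filter, Finset.mem_singleton]
        constructor
        · rintro ⟨hC, hm⟩
          exact hCof_uniq _ C hC hm
        · rintro rfl
          exact ⟨hCofP _, hCofmem _⟩
      calc ∑ C ∈ Part, colorCount j C
          = ∑ C ∈ Part, ∑ x : Fin (t j),
              if Sum.inr (⟨j, x⟩ : Σ j : Fin κ, Fin (t j)) ∈ C then 1 else 0 := by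
            refine Finset.sum_congr rfl (fun C _ => ?_)
            rw [colorCount, Finset.card_filter]
        _ = ∑ x : Fin (t j), ∑ C ∈ Part,
              if Sum.inr (⟨j, x⟩ : Σ j : Fin κ, Fin (t j)) ∈ C then 1 else 0 :=
            Finset.sum_comm
        _ = ∑ _x : Fin (t j), 1 := by
            refine Finset.sum_congr rfl (fun x _ => ?_)
            rw [← Finset.card_filter]
            exact h2 x
        _ = t j := by simp
  constructor
  · constructor
    · rintro ⟨P, h1, h2, h3⟩
      exact ⟨P, h1, h2, nsis P h3⟩
    · intro h
      exact sol_ns (is_sol h)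
  · constructor
    · exact is_sol
    · intro h
      obtain ⟨P, h1, h2, h3⟩ := sol_ns h
      exact ⟨P, h1, h2, nsis P h3⟩
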